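/- Let A ∈ ℝ^{m×n}, L ∈ ℝ^{p×n}, b ∈ ℝ^m, λ > 0, ε > 0, and 0 < q ≤ 2. Define the smoothed ℓ_q objective J_ε(x) = ‖Ax − b‖₂² + λ Σ_{i=1}^{p} ((Lx)_i² + ε²)^{q/2}, and for a point y ∈ ℝ^n define the MM weights w_i(y) = ((Ly)_i² + ε²)^{(q−2)/2}. If x⁺ ∈ ℝ^n minimizes over x the weighted quadratic surrogate ‖Ax − b‖₂² + λ·(q/2)·Σ_{i=1}^{p} w_i(y)·(Lx)_i², then J_ε(x⁺) ≤ J_ε(y). -/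

import Mathlib

open Finset

lemma key_concave (q : ℝ) (hq0 : 0 < q) (hq2 : q ≤ 2) {a u : ℝ}
    (ha : 0 < a) (hu : 0 < u) :
    a ^ (q / 2) ≤ u ^ (q / 2) + (q / 2) * (u ^ ((q - 2) / 2) * (a - u)) := by
  have hs : (-1 : ℝ) ≤ a / u - 1 := by
    have : 0 ≤ a / u := le_of_lt (div_pos ha hu)
    linarith
  have hp1 : (0:ℝ) ≤ q / 2 := by linarith
  have hp2 : q / 2 ≤ 1 := by linarith
  have hber := rpow_one_add_le_one_add_mul_self hs hp1 hp2
  have h1 : (1 + (a / u - 1)) = a / u := by ring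
  rw [h1] at hber
  have hu' : u ≠ 0 := ne_of_gt hu
  have hmul := mul_le_mul_of_nonneg_left hber (le_of_lt (Real.rpow_pos_of_pos hu (q/2)))
  have hlhs : u ^ (q / 2) * (a / u) ^ (q / 2) = a ^ (q / 2) := by
    rw [← Real.mul_rpow (le_of_lt hu) (le_of_lt (div_pos ha hu)),
      mul_div_cancel₀ a hu']
  rw [hlhs] at hmul
  refine hmul.trans (le_of_eq ?_)
  have hexp : u ^ ((q - 2) / 2) = u ^ (q / 2) / u := by
    have : (q - 2) / 2 = q / 2 - 1 := by ring
    rw [this, Real.rpow_sub hu, Real.rpow_one]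
  rw [hexp]
  field_simp

open Finset in
/-- If `x⁺` minimizes the MM weighted quadratic surrogate
`‖Ax − b‖₂² + λ(q/2) Σᵢ wᵢ(y) (Lx)ᵢ²` with weights
`wᵢ(y) = ((Ly)ᵢ² + ε²)^{(q−2)/2}`, then it decreases the smoothed ℓ_q objective:
`J_ε(x⁺) ≤ J_ε(y)` where `J_ε(x) = ‖Ax − b‖₂² + λ Σᵢ ((Lx)ᵢ² + ε²)^{q/2}`. -/
theorem mm_weighted_l2_descent
    (m n p : ℕ) (q ε lam : ℝ)
    (hq0 : 0 < q) (hq2 : q ≤ 2) (hε : 0 < ε) (hlam : 0 < lam)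
    (A : Matrix (Fin m) (Fin n) ℝ) (L : Matrix (Fin p) (Fin n) ℝ)
    (b : Fin m → ℝ) (y xplus : Fin n → ℝ)
    (hmin : ∀ x : Fin n → ℝ,
      (∑ j, (A.mulVec xplus j - b j) ^ 2)
          + lam * (q / 2) *
            ∑ i, ((L.mulVec y i) ^ 2 + ε ^ 2) ^ ((q - 2) / 2) * (L.mulVec xplus i) ^ 2
        ≤ (∑ j, (A.mulVec x j - b j) ^ 2)
          + lam * (q / 2) *
            ∑ i, ((L.mulVec y i) ^ 2 + ε ^ 2) ^ ((q - 2) / 2) * (L.mulVec x i) ^ 2) :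
    (∑ j, (A.mulVec xplus j - b j) ^ 2)
        + lam * ∑ i, ((L.mulVec xplus i) ^ 2 + ε ^ 2) ^ (q / 2)
      ≤ (∑ j, (A.mulVec y j - b j) ^ 2)
        + lam * ∑ i, ((L.mulVec y i) ^ 2 + ε ^ 2) ^ (q / 2) := by
  set w : Fin p → ℝ := fun i => ((L.mulVec y i) ^ 2 + ε ^ 2) ^ ((q - 2) / 2) with hw
  have hpos : ∀ (x : Fin n → ℝ) (i : Fin p), 0 < (L.mulVec x i) ^ 2 + ε ^ 2 := by
    intro x i
    have := sq_nonneg (L.mulVec x i)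
    have := pow_pos hε 2
    linarith
  -- Majorization: J_ε surrogate bound for xplus
  have hmaj : ∑ i, ((L.mulVec xplus i) ^ 2 + ε ^ 2) ^ (q / 2)
      ≤ ∑ i, ((L.mulVec y i) ^ 2 + ε ^ 2) ^ (q / 2)
        + (q / 2) * (∑ i, w i * (L.mulVec xplus i) ^ 2
            - ∑ i, w i * (L.mulVec y i) ^ 2) := by
    have h1 : ∀ i : Fin p, ((L.mulVec xplus i) ^ 2 + ε ^ 2) ^ (q / 2)
        ≤ ((L.mulVec y i) ^ 2 + ε ^ 2) ^ (q / 2)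
          + (q / 2) * (w i * (L.mulVec xplus i) ^ 2 - w i * (L.mulVec y i) ^ 2) := by
      intro i
      have := key_concave q hq0 hq2 (hpos xplus i) (hpos y i)
      calc ((L.mulVec xplus i) ^ 2 + ε ^ 2) ^ (q / 2)
          ≤ ((L.mulVec y i) ^ 2 + ε ^ 2) ^ (q / 2)
            + (q / 2) * (w i * (((L.mulVec xplus i) ^ 2 + ε ^ 2)
              - ((L.mulVec y i) ^ 2 + ε ^ 2))) := this
        _ = ((L.mulVec y i) ^ 2 + ε ^ 2) ^ (q / 2)
            + (q / 2) * (w i * (L.mulVec xplus i) ^ 2 - w i * (L.mulVec y i) ^ 2) := by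
            ring
    calc ∑ i, ((L.mulVec xplus i) ^ 2 + ε ^ 2) ^ (q / 2)
        ≤ ∑ i, (((L.mulVec y i) ^ 2 + ε ^ 2) ^ (q / 2)
            + (q / 2) * (w i * (L.mulVec xplus i) ^ 2 - w i * (L.mulVec y i) ^ 2)) :=
          Finset.sum_le_sum fun i _ => h1 i
      _ = ∑ i, ((L.mulVec y i) ^ 2 + ε ^ 2) ^ (q / 2)
          + (q / 2) * (∑ i, w i * (L.mulVec xplus i) ^ 2
              - ∑ i, w i * (L.mulVec y i) ^ 2) := by
          simp only [Finset.sum_add_distrib, Finset.mul_sum, Finset.sum_sub_distrib,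
            mul_sub]
  have hminy := hmin y
  nlinarith [mul_le_mul_of_nonneg_left hmaj (le_of_lt hlam)]
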